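/- Let n ≥ 3 and let k ≥ 1 be an integer with 2k + 1 ≤ n − 1. If κ ∈ Γ satisfies κ_i > 0 for all i and Ñ_k(κ) = p_1(κ) · L̃_k(κ), then κ_i ≥ 1 for all i. -/

import Mathlib

/-- The `k`-th elementary symmetric polynomial of `x : Fin m → ℝ`. -/
noncomputable def esymm {m : ℕ} (k : ℕ) (x : Fin m → ℝ) : ℝ :=
  ∑ s ∈ Finset.univ.powersetCard k, ∏ i ∈ s, x i

/-- The normalized `k`-th elementary symmetric function `p_k = σ_k / C(m,k)`. -/
noncomputable def pnorm {m : ℕ} (k : ℕ) (x : Fin m → ℝ) : ℝ :=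
  esymm k x / (m.choose k : ℝ)

/-- `L̃_k(λ) = Σ_{i=0}^k (−1)^i C(k,i) p_{2k−2i}(λ)`. -/
noncomputable def Ltilde {m : ℕ} (k : ℕ) (x : Fin m → ℝ) : ℝ :=
  ∑ i ∈ Finset.range (k + 1), (-1 : ℝ) ^ i * (k.choose i : ℝ) * pnorm (2 * k - 2 * i) x

/-- `Ñ_k(λ) = Σ_{i=0}^k (−1)^i C(k,i) p_{2k+1−2i}(λ)`. -/
noncomputable def Ntilde {m : ℕ} (k : ℕ) (x : Fin m → ℝ) : ℝ :=
  ∑ i ∈ Finset.range (k + 1), (-1 : ℝ) ^ i * (k.choose i : ℝ) * pnorm (2 * k + 1 - 2 * i) x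

namespace HC

variable {m : ℕ} (x : Fin m → ℝ)

noncomputable def E (r : ℕ) (A : Finset (Fin m)) : ℝ :=
  ∑ s ∈ A.powersetCard r, ∏ i ∈ s, x i

lemma E_zero (A : Finset (Fin m)) : E x 0 A = 1 := by
  simp [E, Finset.powersetCard_zero]

lemma E_one (A : Finset (Fin m)) : E x 1 A = ∑ i ∈ A, x i := by
  simp [E, Finset.powersetCard_one]

lemma E_insert {a : Fin m} {A : Finset (Fin m)} (h : a ∉ A) (r : ℕ) :
    E x (r + 1) (insert a A) = E x (r + 1) A + x a * E x r A := by
  unfold E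
  rw [Finset.powersetCard_succ_insert h, Finset.sum_union, Finset.sum_image]
  · congr 1
    rw [Finset.mul_sum]
    refine Finset.sum_congr rfl fun s hs => ?_
    have hns : a ∉ s := fun hc => h ((Finset.mem_powersetCard.mp hs).1 hc)
    rw [Finset.prod_insert hns]
  · intro s hs t ht hst
    have hns : a ∉ s := fun hc => h ((Finset.mem_powersetCard.mp hs).1 hc)
    have hnt : a ∉ t := fun hc => h ((Finset.mem_powersetCard.mp ht).1 hc)
    rw [← Finset.erase_insert hns, ← Finset.erase_insert hnt, hst]
  · rw [Finset.disjoint_left]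
    intro s hs hs'
    obtain ⟨t, ht, rfl⟩ := Finset.mem_image.mp hs'
    exact h ((Finset.mem_powersetCard.mp hs).1 (Finset.mem_insert_self a t))

lemma E_erase {a : Fin m} {A : Finset (Fin m)} (h : a ∈ A) (r : ℕ) :
    E x (r + 1) A = E x (r + 1) (A.erase a) + x a * E x r (A.erase a) := by
  conv_lhs => rw [← Finset.insert_erase h]
  exact E_insert x (Finset.notMem_erase a A) r

lemma sum_x_mul_E (A : Finset (Fin m)) : ∀ r : ℕ,
    ∑ i ∈ A, x i * E x r (A.erase i) = ((r : ℝ) + 1) * E x (r + 1) A := by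
  induction A using Finset.induction_on with
  | empty =>
    intro r
    have : E x (r + 1) (∅ : Finset (Fin m)) = 0 := by
      rw [E, Finset.powersetCard_eq_empty.mpr (by simp), Finset.sum_empty]
    simp [this]
  | @insert a B ha ih =>
    intro r
    have herase : ∀ i ∈ B, (insert a B).erase i = insert a (B.erase i) := fun i hi =>
      Finset.erase_insert_of_ne (fun hc => ha (hc ▸ hi))
    have hnotmem : ∀ i, a ∉ B.erase i := fun i hc => ha (Finset.mem_of_mem_erase hc)
    rw [Finset.sum_insert ha, Finset.erase_insert ha]
    match r with
    | 0 =>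
      have : ∀ i ∈ B, x i * E x 0 ((insert a B).erase i) = x i := by
        intro i hi; rw [E_zero]; ring
      rw [Finset.sum_congr rfl this, E_zero, E_one, Finset.sum_insert ha]
      ring
    | r + 1 =>
      have step : ∀ i ∈ B, x i * E x (r + 1) ((insert a B).erase i)
          = x i * E x (r + 1) (B.erase i) + x a * (x i * E x r (B.erase i)) := by
        intro i hi
        rw [herase i hi, E_insert x (hnotmem i) r]
        ring
      rw [Finset.sum_congr rfl step, Finset.sum_add_distrib, ← Finset.mul_sum, ih (r + 1), ih r,
        E_insert x ha (r + 1)]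
      push_cast; ring

lemma sum_E_erase (A : Finset (Fin m)) (r : ℕ) :
    ∑ i ∈ A, E x r (A.erase i) = ((A.card : ℝ) - r) * E x r A := by
  match r with
  | 0 =>
    simp only [E_zero, Finset.sum_const, nsmul_eq_mul, mul_one]
    push_cast; ring
  | r + 1 =>
    have step : ∀ i ∈ A, E x (r + 1) (A.erase i)
        = E x (r + 1) A - x i * E x r (A.erase i) := by
      intro i hi
      rw [E_erase x hi r]; ring
    rw [Finset.sum_congr rfl step, Finset.sum_sub_distrib, Finset.sum_const, sum_x_mul_E]
    push_cast; ring

lemma sum_sq_mul_E (A : Finset (Fin m)) (r : ℕ) :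
    ∑ i ∈ A, (x i) ^ 2 * E x r (A.erase i)
      = E x 1 A * E x (r + 1) A - ((r : ℝ) + 2) * E x (r + 2) A := by
  have step : ∀ i ∈ A, (x i) ^ 2 * E x r (A.erase i)
      = x i * E x (r + 1) A - x i * E x (r + 1) (A.erase i) := by
    intro i hi
    rw [E_erase x hi r]; ring
  rw [Finset.sum_congr rfl step, Finset.sum_sub_distrib, ← Finset.sum_mul, sum_x_mul_E, E_one]
  push_cast; ring_nf


lemma sum_pairs_comm (A : Finset (Fin m)) (f : Fin m → Fin m → ℝ) :
    ∑ i ∈ A, ∑ l ∈ A.erase i, f i l = ∑ i ∈ A, ∑ l ∈ A.erase i, f l i := by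
  have expand : ∀ g : Fin m → Fin m → ℝ,
      ∑ i ∈ A, ∑ l ∈ A.erase i, g i l = (∑ i ∈ A, ∑ l ∈ A, g i l) - ∑ i ∈ A, g i i := by
    intro g
    rw [← Finset.sum_sub_distrib]
    exact Finset.sum_congr rfl fun i hi => Finset.sum_erase_eq_sub hi
  rw [expand, expand, Finset.sum_comm (f := fun i l => f l i)]

lemma D1 (A : Finset (Fin m)) (r : ℕ) :
    ∑ i ∈ A, ∑ l ∈ A.erase i, (x i * x l) * E x r ((A.erase i).erase l)
      = ((r : ℝ) + 1) * ((r : ℝ) + 2) * E x (r + 2) A := by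
  have inner : ∀ i ∈ A, ∑ l ∈ A.erase i, (x i * x l) * E x r ((A.erase i).erase l)
      = x i * (((r : ℝ) + 1) * E x (r + 1) (A.erase i)) := by
    intro i hi
    rw [← sum_x_mul_E x (A.erase i) r, Finset.mul_sum]
    exact Finset.sum_congr rfl fun l hl => by ring
  rw [Finset.sum_congr rfl inner]
  have : ∑ i ∈ A, x i * (((r : ℝ) + 1) * E x (r + 1) (A.erase i))
      = ((r : ℝ) + 1) * ∑ i ∈ A, x i * E x (r + 1) (A.erase i) := by
    rw [Finset.mul_sum]; exact Finset.sum_congr rfl fun i _ => by ring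
  rw [this, sum_x_mul_E x A (r + 1)]
  push_cast; ring

lemma D2 (A : Finset (Fin m)) (r : ℕ) :
    ∑ i ∈ A, ∑ l ∈ A.erase i, E x r ((A.erase i).erase l)
      = ((A.card : ℝ) - 1 - r) * ((A.card : ℝ) - r) * E x r A := by
  have inner : ∀ i ∈ A, ∑ l ∈ A.erase i, E x r ((A.erase i).erase l)
      = ((A.card : ℝ) - 1 - r) * E x r (A.erase i) := by
    intro i hi
    rw [sum_E_erase x (A.erase i) r, Finset.card_erase_of_mem hi]
    have h1 : 1 ≤ A.card := Finset.card_pos.mpr ⟨i, hi⟩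
    have : ((A.card - 1 : ℕ) : ℝ) = (A.card : ℝ) - 1 := by
      push_cast [Nat.cast_sub h1]; ring
    rw [this]
  rw [Finset.sum_congr rfl inner, ← Finset.mul_sum, sum_E_erase x A r]
  ring

lemma D3 (A : Finset (Fin m)) (r : ℕ) :
    ∑ i ∈ A, ∑ l ∈ A.erase i, (x i) ^ 2 * E x r ((A.erase i).erase l)
      = ((A.card : ℝ) - 1 - r) * (E x 1 A * E x (r + 1) A - ((r : ℝ) + 2) * E x (r + 2) A) := by
  have inner : ∀ i ∈ A, ∑ l ∈ A.erase i, (x i) ^ 2 * E x r ((A.erase i).erase l)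
      = ((A.card : ℝ) - 1 - r) * ((x i) ^ 2 * E x r (A.erase i)) := by
    intro i hi
    rw [← Finset.mul_sum, sum_E_erase x (A.erase i) r, Finset.card_erase_of_mem hi]
    have h1 : 1 ≤ A.card := Finset.card_pos.mpr ⟨i, hi⟩
    have : ((A.card - 1 : ℕ) : ℝ) = (A.card : ℝ) - 1 := by
      push_cast [Nat.cast_sub h1]; ring
    rw [this]; ring
  rw [Finset.sum_congr rfl inner, ← Finset.mul_sum, sum_sq_mul_E x A r]

lemma DD (A : Finset (Fin m)) (r : ℕ) :
    ∑ i ∈ A, ∑ l ∈ A.erase i, (x i * x l - 1) * E x r ((A.erase i).erase l)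
      = ((r : ℝ) + 1) * ((r : ℝ) + 2) * E x (r + 2) A
        - ((A.card : ℝ) - 1 - r) * ((A.card : ℝ) - r) * E x r A := by
  have expand : ∀ i ∈ A, ∑ l ∈ A.erase i, (x i * x l - 1) * E x r ((A.erase i).erase l)
      = (∑ l ∈ A.erase i, (x i * x l) * E x r ((A.erase i).erase l))
        - ∑ l ∈ A.erase i, E x r ((A.erase i).erase l) := by
    intro i hi
    rw [← Finset.sum_sub_distrib]
    exact Finset.sum_congr rfl fun l hl => by ring
  rw [Finset.sum_congr rfl expand, Finset.sum_sub_distrib, D1, D2]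

lemma DSQ (A : Finset (Fin m)) (r : ℕ) :
    ∑ i ∈ A, ∑ l ∈ A.erase i, (x i - x l) ^ 2 * E x r ((A.erase i).erase l)
      = 2 * ((A.card : ℝ) - 1 - r)
          * (E x 1 A * E x (r + 1) A - ((r : ℝ) + 2) * E x (r + 2) A)
        - 2 * ((r : ℝ) + 1) * ((r : ℝ) + 2) * E x (r + 2) A := by
  have expand : ∀ i ∈ A, ∑ l ∈ A.erase i, (x i - x l) ^ 2 * E x r ((A.erase i).erase l)
      = (∑ l ∈ A.erase i, (x i) ^ 2 * E x r ((A.erase i).erase l))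
        + (∑ l ∈ A.erase i, (x l) ^ 2 * E x r ((A.erase i).erase l))
        - 2 * ∑ l ∈ A.erase i, (x i * x l) * E x r ((A.erase i).erase l) := by
    intro i hi
    rw [← Finset.sum_add_distrib, Finset.mul_sum, ← Finset.sum_sub_distrib]
    exact Finset.sum_congr rfl fun l hl => by ring
  rw [Finset.sum_congr rfl expand, Finset.sum_sub_distrib, Finset.sum_add_distrib]
  have swap : ∑ i ∈ A, ∑ l ∈ A.erase i, (x l) ^ 2 * E x r ((A.erase i).erase l)
      = ∑ i ∈ A, ∑ l ∈ A.erase i, (x i) ^ 2 * E x r ((A.erase i).erase l) := by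
    rw [sum_pairs_comm A (fun i l => (x l) ^ 2 * E x r ((A.erase i).erase l))]
    refine Finset.sum_congr rfl fun i hi => Finset.sum_congr rfl fun l hl => ?_
    rw [Finset.erase_right_comm]
  rw [swap, D3, ← Finset.mul_sum, D1]
  ring



def gZ (j u mm : ℕ) : ℕ :=
  j.choose u * (2 * u + 1).factorial * (mm - (2 * u + 1)).descFactorial (2 * (j - u))

def gW (j u mm : ℕ) : ℕ :=
  j.choose u * (2 * u).factorial * (mm - 2 * u).descFactorial (2 * (j - u))

lemma dF_top2 (n k : ℕ) :
    (n + 2).descFactorial (k + 2) = (n + 2) * ((n + 1) * n.descFactorial k) := by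
  rw [show n + 2 = (n + 1) + 1 from rfl, Nat.succ_descFactorial_succ,
    Nat.succ_descFactorial_succ]

lemma dF_add (n a b : ℕ) :
    n.descFactorial (a + b) = n.descFactorial a * (n - a).descFactorial b := by
  induction b with
  | zero => simp
  | succ b ih =>
    rw [show a + (b + 1) = (a + b) + 1 from rfl, Nat.descFactorial_succ, ih,
      Nat.descFactorial_succ, show n - (a + b) = n - a - b from (Nat.sub_sub n a b).symm]
    ring

lemma gZ_rec (j u mm : ℕ) (hu : u ≤ j + 1) (hm : 2 * j + 3 ≤ mm) :
    gZ (j + 1) u mm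
      = 2 * u * (2 * u + 1) * gZ j (u - 1) (mm - 2)
        + (mm - 2 * u - 2) * (mm - 2 * u - 1) * gZ j u (mm - 2) := by
  obtain ⟨c, rfl⟩ : ∃ c, mm = 2 * j + 3 + c := ⟨mm - (2 * j + 3), by omega⟩
  match u with
  | 0 =>
    unfold gZ
    simp only [Nat.choose_zero_right, Nat.sub_zero]
    rw [show 2 * j + 3 + c - (2 * 0 + 1) = (2 * j + c) + 2 by omega,
      show 2 * (j + 1) = (2 * j) + 2 by ring, dF_top2,
      show 2 * j + 3 + c - 2 - (2 * 0 + 1) = 2 * j + c by omega,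
      show 2 * j + 3 + c - 2 * 0 - 2 = 2 * j + 1 + c by omega,
      show 2 * j + 3 + c - 2 * 0 - 1 = 2 * j + 2 + c by omega]
    ring
  | v + 1 =>
    rcases Nat.lt_or_ge v j with hv | hv
    · obtain ⟨d, rfl⟩ : ∃ d, j = v + d + 1 := ⟨j - v - 1, by omega⟩
      unfold gZ
      rw [show v + 1 - 1 = v by omega,
        show 2 * (v + d + 1) + 3 + c - (2 * (v + 1) + 1) = (2 * d + c) + 2 by omega,
        show 2 * (v + d + 1 + 1 - (v + 1)) = (2 * d) + 2 by omega, dF_top2,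
        show 2 * (v + d + 1) + 3 + c - 2 - (2 * v + 1) = (2 * d + c) + 2 by omega,
        show 2 * (v + d + 1 - v) = (2 * d) + 2 by omega, dF_top2,
        show 2 * (v + d + 1) + 3 + c - 2 - (2 * (v + 1) + 1) = 2 * d + c by omega,
        show 2 * (v + d + 1 - (v + 1)) = 2 * d by omega,
        show 2 * (v + d + 1) + 3 + c - 2 * (v + 1) - 2 = 2 * d + c + 1 by omega,
        show 2 * (v + d + 1) + 3 + c - 2 * (v + 1) - 1 = 2 * d + c + 2 by omega,
        show v + d + 1 + 1 = (v + d + 1) + 1 from rfl,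
        Nat.choose_succ_succ (v + d + 1) v,
        show 2 * (v + 1) + 1 = (2 * v + 2) + 1 by ring,
        Nat.factorial_succ (2 * v + 2),
        show 2 * v + 2 = (2 * v + 1) + 1 from rfl,
        Nat.factorial_succ (2 * v + 1)]
      ring
    · have hvj : v = j := le_antisymm (by omega) hv
      subst hvj
      unfold gZ
      rw [show v + 1 - 1 = v by omega,
        show 2 * (v + 1 - (v + 1)) = 0 by omega,
        show 2 * (v - v) = 0 by omega,
        show 2 * (v - (v + 1)) = 0 by omega,
        Nat.choose_succ_succ v v, Nat.choose_succ_self, Nat.choose_self,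
        show 2 * (v + 1) + 1 = (2 * v + 2) + 1 by ring,
        Nat.factorial_succ (2 * v + 2),
        show 2 * v + 2 = (2 * v + 1) + 1 from rfl,
        Nat.factorial_succ (2 * v + 1),
        Nat.descFactorial_zero, Nat.descFactorial_zero, Nat.descFactorial_zero]
      ring

lemma gW_rec (j u mm : ℕ) (hu : u ≤ j + 1) (hm : 2 * j + 2 ≤ mm) :
    gW (j + 1) u mm
      = (2 * u - 1) * (2 * u) * gW j (u - 1) (mm - 2)
        + (mm - 2 * u - 1) * (mm - 2 * u) * gW j u (mm - 2) := by
  obtain ⟨c, rfl⟩ : ∃ c, mm = 2 * j + 2 + c := ⟨mm - (2 * j + 2), by omega⟩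
  match u with
  | 0 =>
    unfold gW
    simp only [Nat.choose_zero_right, Nat.sub_zero, Nat.mul_zero]
    rw [show 2 * j + 2 + c - 1 = 2 * j + 1 + c by omega,
      show 2 * j + 2 + c - 2 = 2 * j + c by omega,
      show 2 * j + 2 + c = (2 * j + c) + 2 by omega,
      show 2 * (j + 1) = (2 * j) + 2 by ring, dF_top2]
    ring
  | v + 1 =>
    rcases Nat.lt_or_ge v j with hv | hv
    · obtain ⟨d, rfl⟩ : ∃ d, j = v + d + 1 := ⟨j - v - 1, by omega⟩
      unfold gW
      rw [show v + 1 - 1 = v by omega,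
        show 2 * (v + d + 1) + 2 + c - 2 * (v + 1) - 1 = 2 * d + c + 1 by omega,
        show 2 * (v + d + 1) + 2 + c - 2 - 2 * (v + 1) = 2 * d + c by omega,
        show 2 * (v + d + 1) + 2 + c - 2 * (v + 1) = (2 * d + c) + 2 by omega,
        show 2 * (v + d + 1 + 1 - (v + 1)) = (2 * d) + 2 by omega, dF_top2,
        show 2 * (v + d + 1) + 2 + c - 2 - 2 * v = (2 * d + c) + 2 by omega,
        show 2 * (v + d + 1 - v) = (2 * d) + 2 by omega, dF_top2,
        show 2 * (v + d + 1 - (v + 1)) = 2 * d by omega,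
        show v + d + 1 + 1 = (v + d + 1) + 1 from rfl,
        Nat.choose_succ_succ (v + d + 1) v,
        show 2 * (v + 1) - 1 = 2 * v + 1 by omega,
        show 2 * (v + 1) = (2 * v + 1) + 1 by ring,
        Nat.factorial_succ (2 * v + 1),
        show 2 * v + 1 = (2 * v) + 1 from rfl,
        Nat.factorial_succ (2 * v)]
      ring
    · have hvj : v = j := le_antisymm (by omega) hv
      subst hvj
      unfold gW
      rw [show v + 1 - 1 = v by omega,
        show 2 * (v + 1 - (v + 1)) = 0 by omega,
        show 2 * (v - v) = 0 by omega,
        show 2 * (v - (v + 1)) = 0 by omega,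
        Nat.choose_succ_succ v v, Nat.choose_succ_self, Nat.choose_self,
        show 2 * (v + 1) - 1 = 2 * v + 1 by omega,
        show 2 * (v + 1) = (2 * v + 1) + 1 by ring,
        Nat.factorial_succ (2 * v + 1),
        show 2 * v + 1 = (2 * v) + 1 from rfl,
        Nat.factorial_succ (2 * v),
        Nat.descFactorial_zero, Nat.descFactorial_zero, Nat.descFactorial_zero]
      ring

lemma gZb (j v mm : ℕ) :
    gZ (j + 1) (v + 1) mm = 2 * (j + 1) * (2 * v + 3) * gZ j v (mm - 2) := by
  unfold gZ
  have key := Nat.add_one_mul_choose_eq j v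
  rw [show mm - 2 - (2 * v + 1) = mm - (2 * (v + 1) + 1) by omega,
    show j + 1 - (v + 1) = j - v by omega,
    show 2 * (v + 1) + 1 = (2 * v + 2) + 1 by ring,
    Nat.factorial_succ (2 * v + 2),
    show 2 * v + 2 = (2 * v + 1) + 1 from rfl,
    Nat.factorial_succ (2 * v + 1)]
  calc (j + 1).choose (v + 1) * ((2 * v + 2 + 1) * ((2 * v + 1 + 1) * (2 * v + 1).factorial))
          * (mm - (2 * (v + 1) + 1)).descFactorial (2 * (j - v))
      = ((j + 1).choose (v + 1) * (v + 1)) * ((2 * v + 3) * (2 * (2 * v + 1).factorial))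
          * (mm - (2 * (v + 1) + 1)).descFactorial (2 * (j - v)) := by ring
    _ = (Nat.succ j * j.choose v) * ((2 * v + 3) * (2 * (2 * v + 1).factorial))
          * (mm - (2 * (v + 1) + 1)).descFactorial (2 * (j - v)) := by
        rw [key]
    _ = _ := by rw [Nat.succ_eq_add_one]; ring

lemma gab (j v mm : ℕ) (hv : v ≤ j) (hm : 2 * j + 3 ≤ mm) :
    (mm - 2 * j - 2) * gW (j + 1) (v + 1) mm
      = 2 * (j + 1) * (mm - 2 * v - 2) * gZ j v (mm - 2) := by
  obtain ⟨c, rfl⟩ : ∃ c, mm = 2 * j + 3 + c := ⟨mm - (2 * j + 3), by omega⟩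
  obtain ⟨d, rfl⟩ : ∃ d, j = v + d := ⟨j - v, by omega⟩
  unfold gZ gW
  have key := Nat.add_one_mul_choose_eq (v + d) v
  rw [show 2 * (v + d) + 3 + c - 2 * (v + 1) = (2 * d + c) + 1 by omega,
    show 2 * (v + d + 1 - (v + 1)) = (2 * d) + 0 by omega,
    show 2 * (v + d) + 3 + c - 2 - (2 * v + 1) = 2 * d + c by omega,
    show 2 * (v + d - v) = 2 * d by omega,
    show 2 * (v + d) + 3 + c - 2 * (v + d) - 2 = c + 1 by omega,
    show 2 * (v + d) + 3 + c - 2 * v - 2 = 2 * d + c + 1 by omega,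
    show 2 * (v + 1) = (2 * v + 1) + 1 by ring,
    Nat.factorial_succ (2 * v + 1)]
  have hdf : ((2 * d + c) + 1).descFactorial ((2 * d) + 0)
      = (2 * d + c + 1).descFactorial (2 * d) := by norm_num
  rw [hdf]
  have peel : (c + 1) * (2 * d + c + 1).descFactorial (2 * d)
      = (2 * d + c + 1) * (2 * d + c).descFactorial (2 * d) := by
    have h1 : (2 * d + c + 1).descFactorial (2 * d + 1)
        = (2 * d + c + 1 - 2 * d) * (2 * d + c + 1).descFactorial (2 * d) :=
      Nat.descFactorial_succ _ _
    have h2 : (2 * d + c + 1).descFactorial (2 * d + 1)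
        = (2 * d + c + 1) * (2 * d + c).descFactorial (2 * d) :=
      Nat.succ_descFactorial_succ _ _
    rw [show 2 * d + c + 1 - 2 * d = c + 1 by omega] at h1
    omega
  calc (c + 1) * ((v + d + 1).choose (v + 1) * ((2 * v + 1 + 1) * (2 * v + 1).factorial)
          * (2 * d + c + 1).descFactorial (2 * d))
      = ((v + d + 1).choose (v + 1) * (v + 1)) * (2 * (2 * v + 1).factorial)
          * ((c + 1) * (2 * d + c + 1).descFactorial (2 * d)) := by ring
    _ = (Nat.succ (v + d) * (v + d).choose v) * (2 * (2 * v + 1).factorial)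
          * ((2 * d + c + 1) * (2 * d + c).descFactorial (2 * d)) := by rw [key, peel]
    _ = _ := by rw [Nat.succ_eq_add_one]; ring

lemma g0 (j mm : ℕ) (hm : 2 * j + 3 ≤ mm) :
    mm * gZ (j + 1) 0 mm = (mm - 2 * j - 2) * gW (j + 1) 0 mm := by
  obtain ⟨c, rfl⟩ : ∃ c, mm = 2 * j + 3 + c := ⟨mm - (2 * j + 3), by omega⟩
  unfold gZ gW
  simp only [Nat.choose_zero_right, Nat.sub_zero, Nat.mul_zero, Nat.zero_add, Nat.mul_one,
    Nat.one_mul, Nat.factorial_one, Nat.factorial_zero]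
  rw [show 2 * j + 3 + c - (2 * 0 + 1) = 2 * j + 2 + c by omega,
    show 2 * (j + 1) = 2 * j + 2 by ring,
    show 2 * j + 3 + c - 2 * j - 2 = c + 1 by omega]
  have h1 : (2 * j + 3 + c).descFactorial (2 * j + 3)
      = (2 * j + 3 + c) * (2 * j + 2 + c).descFactorial (2 * j + 2) := by
    rw [show 2 * j + 3 + c = (2 * j + 2 + c) + 1 by omega,
      show 2 * j + 3 = (2 * j + 2) + 1 from rfl, Nat.succ_descFactorial_succ]
  have h2 : (2 * j + 3 + c).descFactorial (2 * j + 3)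
      = (c + 1) * (2 * j + 3 + c).descFactorial (2 * j + 2) := by
    rw [show 2 * j + 3 = (2 * j + 2) + 1 from rfl, Nat.descFactorial_succ,
      show 2 * j + 3 + c - (2 * j + 2) = c + 1 by omega]
  calc (2 * j + 3 + c) * (2 * j + 2 + c).descFactorial (2 * j + 2)
      = (2 * j + 3 + c).descFactorial (2 * j + 3) := h1.symm
    _ = (c + 1) * (2 * j + 3 + c).descFactorial (2 * j + 2) := h2

lemma gZ_choose (k u mm : ℕ) (hu : u ≤ k) :
    gZ k u mm * mm.choose (2 * u + 1) = k.choose u * mm.descFactorial (2 * k + 1) := by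
  unfold gZ
  have h1 : (2 * u + 1).factorial * mm.choose (2 * u + 1) = mm.descFactorial (2 * u + 1) :=
    (Nat.descFactorial_eq_factorial_mul_choose mm (2 * u + 1)).symm
  have h2 : mm.descFactorial ((2 * u + 1) + 2 * (k - u))
      = mm.descFactorial (2 * u + 1) * (mm - (2 * u + 1)).descFactorial (2 * (k - u)) :=
    dF_add mm (2 * u + 1) (2 * (k - u))
  rw [show (2 * u + 1) + 2 * (k - u) = 2 * k + 1 by omega] at h2
  calc k.choose u * (2 * u + 1).factorial * (mm - (2 * u + 1)).descFactorial (2 * (k - u))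
        * mm.choose (2 * u + 1)
      = k.choose u * (((2 * u + 1).factorial * mm.choose (2 * u + 1))
          * (mm - (2 * u + 1)).descFactorial (2 * (k - u))) := by ring
    _ = _ := by rw [h1, ← h2]

lemma gW_choose (k u mm : ℕ) (hu : u ≤ k) :
    gW k u mm * mm.choose (2 * u) = k.choose u * mm.descFactorial (2 * k) := by
  unfold gW
  have h1 : (2 * u).factorial * mm.choose (2 * u) = mm.descFactorial (2 * u) :=
    (Nat.descFactorial_eq_factorial_mul_choose mm (2 * u)).symm
  have h2 : mm.descFactorial ((2 * u) + 2 * (k - u))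
      = mm.descFactorial (2 * u) * (mm - 2 * u).descFactorial (2 * (k - u)) :=
    dF_add mm (2 * u) (2 * (k - u))
  rw [show (2 * u) + 2 * (k - u) = 2 * k by omega] at h2
  calc k.choose u * (2 * u).factorial * (mm - 2 * u).descFactorial (2 * (k - u))
        * mm.choose (2 * u)
      = k.choose u * (((2 * u).factorial * mm.choose (2 * u))
          * (mm - 2 * u).descFactorial (2 * (k - u))) := by ring
    _ = _ := by rw [h1, ← h2]

noncomputable def Z (x : Fin m → ℝ) : ℕ → Finset (Fin m) → ℝ
  | 0, A => ∑ i ∈ A, x i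
  | j + 1, A => ∑ i ∈ A, ∑ l ∈ A.erase i, (x i * x l - 1) * Z x j ((A.erase i).erase l)

noncomputable def W (x : Fin m → ℝ) : ℕ → Finset (Fin m) → ℝ
  | 0, _ => 1
  | j + 1, A => ∑ i ∈ A, ∑ l ∈ A.erase i, (x i * x l - 1) * W x j ((A.erase i).erase l)

lemma neg_one_pow_add_two (a : ℕ) : (-1 : ℝ) ^ (a + 2) = (-1 : ℝ) ^ a := by
  rw [pow_add]; norm_num

lemma bridgeZ : ∀ (j : ℕ) (A : Finset (Fin m)), 2 * j + 1 ≤ A.card →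
    Z x j A = ∑ u ∈ Finset.range (j + 1),
      (-1 : ℝ) ^ (j + u) * (gZ j u A.card : ℝ) * E x (2 * u + 1) A := by
  intro j
  induction j with
  | zero =>
    intro A hA
    simp only [Z, Finset.range_one, Finset.sum_singleton, Nat.zero_add, pow_zero, gZ]
    rw [E_one]
    norm_num
  | succ j ih =>
    intro A hA
    have hcard : ∀ i ∈ A, ∀ l ∈ A.erase i, ((A.erase i).erase l).card = A.card - 2 := by
      intro i hi l hl
      rw [Finset.card_erase_of_mem hl, Finset.card_erase_of_mem hi]
      omega
    have hrest : ∀ i ∈ A, ∀ l ∈ A.erase i, 2 * j + 1 ≤ ((A.erase i).erase l).card := by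
      intro i hi l hl; rw [hcard i hi l hl]; omega
    have step1 : Z x (j + 1) A = ∑ u ∈ Finset.range (j + 1),
        ∑ i ∈ A, ∑ l ∈ A.erase i,
          (-1 : ℝ) ^ (j + u) * (gZ j u (A.card - 2) : ℝ) *
            ((x i * x l - 1) * E x (2 * u + 1) ((A.erase i).erase l)) := by
      show (∑ i ∈ A, ∑ l ∈ A.erase i, (x i * x l - 1) * Z x j ((A.erase i).erase l)) = _
      rw [Finset.sum_comm]
      refine Finset.sum_congr rfl fun i hi => ?_
      rw [Finset.sum_comm]
      refine Finset.sum_congr rfl fun l hl => ?_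
      rw [ih _ (hrest i hi l hl), Finset.mul_sum, hcard i hi l hl]
      exact Finset.sum_congr rfl fun u hu => by ring
    have step2 : Z x (j + 1) A = ∑ u ∈ Finset.range (j + 1),
        (-1 : ℝ) ^ (j + u) * (gZ j u (A.card - 2) : ℝ) *
          ((((2 * u + 2) * (2 * u + 3) : ℕ) : ℝ) * E x (2 * u + 3) A
            - (((A.card - 2 * u - 2) * (A.card - 2 * u - 1) : ℕ) : ℝ) * E x (2 * u + 1) A) := by
      rw [step1]
      refine Finset.sum_congr rfl fun u hu => ?_
      have hmem : u < j + 1 := Finset.mem_range.mp hu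
      have hdd := DD x A (2 * u + 1)
      have hc1 : ((A.card - 2 * u - 2 : ℕ) : ℝ) = (A.card : ℝ) - 2 * (u : ℝ) - 2 := by
        rw [show A.card - 2 * u - 2 = A.card - (2 * u + 2) by omega,
          Nat.cast_sub (by omega : 2 * u + 2 ≤ A.card)]
        push_cast; ring
      have hc2 : ((A.card - 2 * u - 1 : ℕ) : ℝ) = (A.card : ℝ) - 2 * (u : ℝ) - 1 := by
        rw [show A.card - 2 * u - 1 = A.card - (2 * u + 1) by omega,
          Nat.cast_sub (by omega : 2 * u + 1 ≤ A.card)]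
        push_cast; ring
      calc ∑ i ∈ A, ∑ l ∈ A.erase i,
            (-1 : ℝ) ^ (j + u) * (gZ j u (A.card - 2) : ℝ) *
              ((x i * x l - 1) * E x (2 * u + 1) ((A.erase i).erase l))
          = (-1 : ℝ) ^ (j + u) * (gZ j u (A.card - 2) : ℝ) *
              ∑ i ∈ A, ∑ l ∈ A.erase i,
                (x i * x l - 1) * E x (2 * u + 1) ((A.erase i).erase l) := by
            rw [Finset.mul_sum]
            refine Finset.sum_congr rfl fun i hi => ?_
            rw [Finset.mul_sum]
        _ = _ := by
            rw [hdd, show (2 * u + 1) + 2 = 2 * u + 3 by ring]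
            push_cast [hc1, hc2]
            ring
    rw [step2]
    have split : ∀ u ∈ Finset.range (j + 1),
        (-1 : ℝ) ^ (j + u) * (gZ j u (A.card - 2) : ℝ) *
          ((((2 * u + 2) * (2 * u + 3) : ℕ) : ℝ) * E x (2 * u + 3) A
            - (((A.card - 2 * u - 2) * (A.card - 2 * u - 1) : ℕ) : ℝ) * E x (2 * u + 1) A)
        = ((-1 : ℝ) ^ (j + u) * (((2 * u + 2) * (2 * u + 3) * gZ j u (A.card - 2) : ℕ) : ℝ)
              * E x (2 * u + 3) A)
          - ((-1 : ℝ) ^ (j + u)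
              * (((A.card - 2 * u - 2) * (A.card - 2 * u - 1) * gZ j u (A.card - 2) : ℕ) : ℝ)
              * E x (2 * u + 1) A) := by
      intro u hu; push_cast; ring
    rw [Finset.sum_congr rfl split, Finset.sum_sub_distrib]
    set f : ℕ → ℝ := fun u => (-1 : ℝ) ^ (j + 1 + u)
        * ((2 * u * (2 * u + 1) * gZ j (u - 1) (A.card - 2) : ℕ) : ℝ) * E x (2 * u + 1) A with hf
    have hS1 : ∑ u ∈ Finset.range (j + 1),
        (-1 : ℝ) ^ (j + u) * (((2 * u + 2) * (2 * u + 3) * gZ j u (A.card - 2) : ℕ) : ℝ)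
          * E x (2 * u + 3) A = ∑ u ∈ Finset.range (j + 2), f u := by
      rw [Finset.sum_range_succ' f (j + 1)]
      have hf0 : f 0 = 0 := by simp [hf]
      rw [hf0, add_zero]
      refine Finset.sum_congr rfl fun u hu => ?_
      simp only [hf, Nat.add_sub_cancel]
      rw [show 2 * (u + 1) * (2 * (u + 1) + 1) = (2 * u + 2) * (2 * u + 3) by ring,
        show 2 * (u + 1) + 1 = 2 * u + 3 by ring,
        show j + 1 + (u + 1) = (j + u) + 2 by ring, neg_one_pow_add_two]
    have hS2 : ∑ u ∈ Finset.range (j + 1),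
        (-1 : ℝ) ^ (j + u)
          * (((A.card - 2 * u - 2) * (A.card - 2 * u - 1) * gZ j u (A.card - 2) : ℕ) : ℝ)
          * E x (2 * u + 1) A
        = ∑ u ∈ Finset.range (j + 2),
        (-1 : ℝ) ^ (j + u)
          * (((A.card - 2 * u - 2) * (A.card - 2 * u - 1) * gZ j u (A.card - 2) : ℕ) : ℝ)
          * E x (2 * u + 1) A := by
      conv_rhs => rw [Finset.sum_range_succ]
      have hz : gZ j (j + 1) (A.card - 2) = 0 := by
        unfold gZ
        rw [Nat.choose_succ_self]
        ring
      rw [hz]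
      norm_num
    rw [hS1, hS2, ← Finset.sum_sub_distrib]
    refine Finset.sum_congr rfl fun u hu => ?_
    have hu' : u ≤ j + 1 := by have := Finset.mem_range.mp hu; omega
    have hrec := gZ_rec j u A.card hu' (by omega)
    have hsign : (-1 : ℝ) ^ (j + u) = -(-1 : ℝ) ^ (j + 1 + u) := by
      rw [show j + 1 + u = (j + u) + 1 by ring, pow_succ]
      ring
    simp only [hf]
    rw [hrec, hsign]
    push_cast
    ring

lemma bridgeW : ∀ (j : ℕ) (A : Finset (Fin m)), 2 * j ≤ A.card →
    W x j A = ∑ u ∈ Finset.range (j + 1),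
      (-1 : ℝ) ^ (j + u) * (gW j u A.card : ℝ) * E x (2 * u) A := by
  intro j
  induction j with
  | zero =>
    intro A hA
    simp only [W, Finset.range_one, Finset.sum_singleton, Nat.zero_add, pow_zero, gW]
    rw [E_zero]
    norm_num
  | succ j ih =>
    intro A hA
    have hcard : ∀ i ∈ A, ∀ l ∈ A.erase i, ((A.erase i).erase l).card = A.card - 2 := by
      intro i hi l hl
      rw [Finset.card_erase_of_mem hl, Finset.card_erase_of_mem hi]
      omega
    have hrest : ∀ i ∈ A, ∀ l ∈ A.erase i, 2 * j ≤ ((A.erase i).erase l).card := by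
      intro i hi l hl; rw [hcard i hi l hl]; omega
    have step1 : W x (j + 1) A = ∑ u ∈ Finset.range (j + 1),
        ∑ i ∈ A, ∑ l ∈ A.erase i,
          (-1 : ℝ) ^ (j + u) * (gW j u (A.card - 2) : ℝ) *
            ((x i * x l - 1) * E x (2 * u) ((A.erase i).erase l)) := by
      show (∑ i ∈ A, ∑ l ∈ A.erase i, (x i * x l - 1) * W x j ((A.erase i).erase l)) = _
      rw [Finset.sum_comm]
      refine Finset.sum_congr rfl fun i hi => ?_
      rw [Finset.sum_comm]
      refine Finset.sum_congr rfl fun l hl => ?_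
      rw [ih _ (hrest i hi l hl), Finset.mul_sum, hcard i hi l hl]
      exact Finset.sum_congr rfl fun u hu => by ring
    have step2 : W x (j + 1) A = ∑ u ∈ Finset.range (j + 1),
        (-1 : ℝ) ^ (j + u) * (gW j u (A.card - 2) : ℝ) *
          ((((2 * u + 1) * (2 * u + 2) : ℕ) : ℝ) * E x (2 * u + 2) A
            - (((A.card - 2 * u - 1) * (A.card - 2 * u) : ℕ) : ℝ) * E x (2 * u) A) := by
      rw [step1]
      refine Finset.sum_congr rfl fun u hu => ?_
      have hmem : u < j + 1 := Finset.mem_range.mp hu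
      have hdd := DD x A (2 * u)
      have hc1 : ((A.card - 2 * u - 1 : ℕ) : ℝ) = (A.card : ℝ) - 2 * (u : ℝ) - 1 := by
        rw [show A.card - 2 * u - 1 = A.card - (2 * u + 1) by omega,
          Nat.cast_sub (by omega : 2 * u + 1 ≤ A.card)]
        push_cast; ring
      have hc2 : ((A.card - 2 * u : ℕ) : ℝ) = (A.card : ℝ) - 2 * (u : ℝ) := by
        rw [Nat.cast_sub (by omega : 2 * u ≤ A.card)]
        push_cast; ring
      calc ∑ i ∈ A, ∑ l ∈ A.erase i,
            (-1 : ℝ) ^ (j + u) * (gW j u (A.card - 2) : ℝ) *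
              ((x i * x l - 1) * E x (2 * u) ((A.erase i).erase l))
          = (-1 : ℝ) ^ (j + u) * (gW j u (A.card - 2) : ℝ) *
              ∑ i ∈ A, ∑ l ∈ A.erase i,
                (x i * x l - 1) * E x (2 * u) ((A.erase i).erase l) := by
            rw [Finset.mul_sum]
            refine Finset.sum_congr rfl fun i hi => ?_
            rw [Finset.mul_sum]
        _ = _ := by
            rw [hdd, show (2 * u) + 2 = 2 * u + 2 by ring]
            push_cast [hc1, hc2]
            ring
    rw [step2]
    have split : ∀ u ∈ Finset.range (j + 1),
        (-1 : ℝ) ^ (j + u) * (gW j u (A.card - 2) : ℝ) *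
          ((((2 * u + 1) * (2 * u + 2) : ℕ) : ℝ) * E x (2 * u + 2) A
            - (((A.card - 2 * u - 1) * (A.card - 2 * u) : ℕ) : ℝ) * E x (2 * u) A)
        = ((-1 : ℝ) ^ (j + u) * (((2 * u + 1) * (2 * u + 2) * gW j u (A.card - 2) : ℕ) : ℝ)
              * E x (2 * u + 2) A)
          - ((-1 : ℝ) ^ (j + u)
              * (((A.card - 2 * u - 1) * (A.card - 2 * u) * gW j u (A.card - 2) : ℕ) : ℝ)
              * E x (2 * u) A) := by
      intro u hu; push_cast; ring
    rw [Finset.sum_congr rfl split, Finset.sum_sub_distrib]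
    set f : ℕ → ℝ := fun u => (-1 : ℝ) ^ (j + 1 + u)
        * (((2 * u - 1) * (2 * u) * gW j (u - 1) (A.card - 2) : ℕ) : ℝ) * E x (2 * u) A with hf
    have hS1 : ∑ u ∈ Finset.range (j + 1),
        (-1 : ℝ) ^ (j + u) * (((2 * u + 1) * (2 * u + 2) * gW j u (A.card - 2) : ℕ) : ℝ)
          * E x (2 * u + 2) A = ∑ u ∈ Finset.range (j + 2), f u := by
      rw [Finset.sum_range_succ' f (j + 1)]
      have hf0 : f 0 = 0 := by simp [hf]
      rw [hf0, add_zero]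
      refine Finset.sum_congr rfl fun u hu => ?_
      simp only [hf, Nat.add_sub_cancel]
      rw [show (2 * (u + 1) - 1) * (2 * (u + 1)) = (2 * u + 1) * (2 * u + 2) by
          rw [show 2 * (u + 1) - 1 = 2 * u + 1 by omega]; ring,
        show 2 * (u + 1) = 2 * u + 2 by ring,
        show j + 1 + (u + 1) = (j + u) + 2 by ring, neg_one_pow_add_two]
    have hS2 : ∑ u ∈ Finset.range (j + 1),
        (-1 : ℝ) ^ (j + u)
          * (((A.card - 2 * u - 1) * (A.card - 2 * u) * gW j u (A.card - 2) : ℕ) : ℝ)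
          * E x (2 * u) A
        = ∑ u ∈ Finset.range (j + 2),
        (-1 : ℝ) ^ (j + u)
          * (((A.card - 2 * u - 1) * (A.card - 2 * u) * gW j u (A.card - 2) : ℕ) : ℝ)
          * E x (2 * u) A := by
      conv_rhs => rw [Finset.sum_range_succ]
      have hz : gW j (j + 1) (A.card - 2) = 0 := by
        unfold gW
        rw [Nat.choose_succ_self]
        ring
      rw [hz]
      norm_num
    rw [hS1, hS2, ← Finset.sum_sub_distrib]
    refine Finset.sum_congr rfl fun u hu => ?_
    have hu' : u ≤ j + 1 := by have := Finset.mem_range.mp hu; omega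
    have hrec := gW_rec j u A.card hu' (by omega)
    have hsign : (-1 : ℝ) ^ (j + u) = -(-1 : ℝ) ^ (j + 1 + u) := by
      rw [show j + 1 + u = (j + u) + 1 by ring, pow_succ]
      ring
    simp only [hf]
    rw [hrec, hsign]
    push_cast
    ring

lemma key (j : ℕ) (A : Finset (Fin m)) (hA : 2 * j + 3 ≤ A.card) :
    ((A.card - 2 * j - 2 : ℕ) : ℝ) * E x 1 A * W x (j + 1) A - (A.card : ℝ) * Z x (j + 1) A
      = ((j : ℝ) + 1) *
        ∑ i ∈ A, ∑ l ∈ A.erase i, (x i - x l) ^ 2 * Z x j ((A.erase i).erase l) := by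
  have hcard : ∀ i ∈ A, ∀ l ∈ A.erase i, ((A.erase i).erase l).card = A.card - 2 := by
    intro i hi l hl
    rw [Finset.card_erase_of_mem hl, Finset.card_erase_of_mem hi]
    omega
  have hrest : ∀ i ∈ A, ∀ l ∈ A.erase i, 2 * j + 1 ≤ ((A.erase i).erase l).card := by
    intro i hi l hl; rw [hcard i hi l hl]; omega
  -- Right-hand side expansion
  have rstep1 : (∑ i ∈ A, ∑ l ∈ A.erase i, (x i - x l) ^ 2 * Z x j ((A.erase i).erase l))
      = ∑ u ∈ Finset.range (j + 1), ∑ i ∈ A, ∑ l ∈ A.erase i,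
          (-1 : ℝ) ^ (j + u) * (gZ j u (A.card - 2) : ℝ) *
            ((x i - x l) ^ 2 * E x (2 * u + 1) ((A.erase i).erase l)) := by
    rw [Finset.sum_comm]
    refine Finset.sum_congr rfl fun i hi => ?_
    rw [Finset.sum_comm]
    refine Finset.sum_congr rfl fun l hl => ?_
    rw [bridgeZ x j _ (hrest i hi l hl), Finset.mul_sum, hcard i hi l hl]
    exact Finset.sum_congr rfl fun u hu => by ring
  have rstep2 : (∑ i ∈ A, ∑ l ∈ A.erase i, (x i - x l) ^ 2 * Z x j ((A.erase i).erase l))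
      = ∑ u ∈ Finset.range (j + 1),
          (-1 : ℝ) ^ (j + u) * (gZ j u (A.card - 2) : ℝ) *
            (2 * ((A.card - 2 * u - 2 : ℕ) : ℝ) * (E x 1 A * E x (2 * u + 2) A)
              - 2 * (A.card : ℝ) * (2 * (u : ℝ) + 3) * E x (2 * u + 3) A) := by
    rw [rstep1]
    refine Finset.sum_congr rfl fun u hu => ?_
    have hmem : u < j + 1 := Finset.mem_range.mp hu
    have hdsq := DSQ x A (2 * u + 1)
    have hc1 : ((A.card - 2 * u - 2 : ℕ) : ℝ) = (A.card : ℝ) - 2 * (u : ℝ) - 2 := by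
      rw [show A.card - 2 * u - 2 = A.card - (2 * u + 2) by omega,
        Nat.cast_sub (by omega : 2 * u + 2 ≤ A.card)]
      push_cast; ring
    calc ∑ i ∈ A, ∑ l ∈ A.erase i,
          (-1 : ℝ) ^ (j + u) * (gZ j u (A.card - 2) : ℝ) *
            ((x i - x l) ^ 2 * E x (2 * u + 1) ((A.erase i).erase l))
        = (-1 : ℝ) ^ (j + u) * (gZ j u (A.card - 2) : ℝ) *
            ∑ i ∈ A, ∑ l ∈ A.erase i,
              (x i - x l) ^ 2 * E x (2 * u + 1) ((A.erase i).erase l) := by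
          rw [Finset.mul_sum]
          refine Finset.sum_congr rfl fun i hi => ?_
          rw [Finset.mul_sum]
      _ = _ := by
          rw [hdsq, show (2 * u + 1) + 2 = 2 * u + 3 by ring,
            show (2 * u + 1) + 1 = 2 * u + 2 by ring]
          rw [hc1]
          push_cast
          ring
  -- Left-hand side expansion
  rw [bridgeW x (j + 1) A (by omega), bridgeZ x (j + 1) A (by omega), rstep2]
  rw [Finset.mul_sum, Finset.mul_sum, ← Finset.sum_sub_distrib]
  have lhs_form : ∀ u ∈ Finset.range (j + 2),
      ((A.card - 2 * j - 2 : ℕ) : ℝ) * E x 1 A *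
          ((-1 : ℝ) ^ (j + 1 + u) * (gW (j + 1) u A.card : ℝ) * E x (2 * u) A)
        - (A.card : ℝ) * ((-1 : ℝ) ^ (j + 1 + u) * (gZ (j + 1) u A.card : ℝ) * E x (2 * u + 1) A)
      = (-1 : ℝ) ^ (j + 1 + u) *
          ((((A.card - 2 * j - 2) * gW (j + 1) u A.card : ℕ) : ℝ) * (E x 1 A * E x (2 * u) A)
            - (((A.card * gZ (j + 1) u A.card : ℕ) : ℝ)) * E x (2 * u + 1) A) := by
    intro u hu; push_cast; ring
  rw [Finset.sum_congr rfl lhs_form]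
  -- convert the RHS to a sum over range (j+2)
  set F : ℕ → ℝ := fun u => ((j : ℝ) + 1) * ((-1 : ℝ) ^ (j + 1 + u) *
      ((gZ j (u - 1) (A.card - 2) : ℕ) : ℝ) *
      (2 * ((A.card - 2 * u : ℕ) : ℝ) * (E x 1 A * E x (2 * u) A)
        - 2 * (A.card : ℝ) * (2 * (u : ℝ) + 1) * E x (2 * u + 1) A)) with hF
  have hF0 : F 0 = 0 := by
    simp only [hF, Nat.mul_zero, Nat.sub_zero, Nat.zero_add, Nat.cast_zero, E_zero]
    ring
  have hRHS : ((j : ℝ) + 1) * ∑ u ∈ Finset.range (j + 1),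
      (-1 : ℝ) ^ (j + u) * (gZ j u (A.card - 2) : ℝ) *
        (2 * ((A.card - 2 * u - 2 : ℕ) : ℝ) * (E x 1 A * E x (2 * u + 2) A)
          - 2 * (A.card : ℝ) * (2 * (u : ℝ) + 3) * E x (2 * u + 3) A)
      = ∑ u ∈ Finset.range (j + 2), F u := by
    rw [Finset.sum_range_succ' F (j + 1), hF0, add_zero, Finset.mul_sum]
    refine Finset.sum_congr rfl fun u hu => ?_
    simp only [hF, Nat.add_sub_cancel]
    rw [show 2 * (u + 1) = 2 * u + 2 by ring,
      show 2 * u + 2 + 1 = 2 * u + 3 by ring,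
      show A.card - (2 * u + 2) = A.card - 2 * u - 2 by omega,
      show j + 1 + (u + 1) = (j + u) + 2 by ring, neg_one_pow_add_two]
    push_cast
    ring
  rw [hRHS]
  -- termwise comparison
  refine Finset.sum_congr rfl fun u hu => ?_
  have humem : u < j + 2 := Finset.mem_range.mp hu
  match u with
  | 0 =>
    rw [hF0]
    have hg := g0 j A.card (by omega)
    have hgR : ((A.card * gZ (j + 1) 0 A.card : ℕ) : ℝ)
        = (((A.card - 2 * j - 2) * gW (j + 1) 0 A.card : ℕ) : ℝ) := by
      exact_mod_cast congrArg (fun t : ℕ => (t : ℝ)) hg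
    rw [hgR, show (2 * 0 : ℕ) = 0 by ring, E_zero]
    ring
  | v + 1 =>
    have hv : v ≤ j := by omega
    rw [show (A.card - 2 * j - 2) * gW (j + 1) (v + 1) A.card
        = 2 * (j + 1) * (A.card - 2 * v - 2) * gZ j v (A.card - 2) from
        gab j v A.card hv (by omega)]
    rw [show gZ (j + 1) (v + 1) A.card = 2 * (j + 1) * (2 * v + 3) * gZ j v (A.card - 2) from
        gZb j v A.card]
    simp only [hF, Nat.add_sub_cancel]
    rw [show A.card - 2 * (v + 1) = A.card - 2 * v - 2 by omega,
      show 2 * (v + 1) = 2 * v + 2 by ring,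
      show 2 * v + 2 + 1 = 2 * v + 3 by ring]
    push_cast
    ring

lemma Z_nonneg : ∀ (j : ℕ) (A : Finset (Fin m)), (∀ i ∈ A, 0 ≤ x i) →
    (∀ i ∈ A, ∀ l ∈ A, i ≠ l → 1 ≤ x i * x l) → 0 ≤ Z x j A := by
  intro j
  induction j with
  | zero =>
    intro A h0 _
    exact Finset.sum_nonneg h0
  | succ j ih =>
    intro A h0 hG
    show 0 ≤ ∑ i ∈ A, ∑ l ∈ A.erase i, (x i * x l - 1) * Z x j ((A.erase i).erase l)
    refine Finset.sum_nonneg fun i hi => Finset.sum_nonneg fun l hl => ?_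
    have hlA : l ∈ A := Finset.mem_of_mem_erase hl
    have hne : l ≠ i := (Finset.mem_erase.mp hl).1
    refine mul_nonneg (by linarith [hG i hi l hlA (Ne.symm hne)]) ?_
    refine ih _ (fun a ha => h0 a (Finset.mem_of_mem_erase (Finset.mem_of_mem_erase ha)))
      (fun a ha b hb hab => hG a (Finset.mem_of_mem_erase (Finset.mem_of_mem_erase ha))
        b (Finset.mem_of_mem_erase (Finset.mem_of_mem_erase hb)) hab)

lemma Z_pos : ∀ (j : ℕ) (A : Finset (Fin m)), (∀ i ∈ A, 1 < x i) →
    2 * j + 1 ≤ A.card → 0 < Z x j A := by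
  intro j
  induction j with
  | zero =>
    intro A h1 hc
    refine Finset.sum_pos (fun i hi => lt_trans one_pos (h1 i hi)) ?_
    rw [← Finset.card_pos]; omega
  | succ j ih =>
    intro A h1 hc
    show 0 < ∑ i ∈ A, ∑ l ∈ A.erase i, (x i * x l - 1) * Z x j ((A.erase i).erase l)
    have hAne : A.Nonempty := by rw [← Finset.card_pos]; omega
    refine Finset.sum_pos (fun i hi => ?_) hAne
    have hone : (A.erase i).Nonempty := by
      rw [← Finset.card_pos, Finset.card_erase_of_mem hi]; omega
    refine Finset.sum_pos (fun l hl => ?_) hone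
    have hlA : l ∈ A := Finset.mem_of_mem_erase hl
    have hx1 : 1 < x i * x l := one_lt_mul (le_of_lt (h1 i hi)) (h1 l hlA)
    refine mul_pos (by linarith) ?_
    refine ih _ (fun a ha => h1 a (Finset.mem_of_mem_erase (Finset.mem_of_mem_erase ha))) ?_
    rw [Finset.card_erase_of_mem hl, Finset.card_erase_of_mem hi]
    omega

lemma neg_one_pow_sub {u k : ℕ} (hu : u ≤ k) : (-1 : ℝ) ^ (k - u) = (-1 : ℝ) ^ (k + u) := by
  rw [show k + u = (k - u) + 2 * u by omega, pow_add, pow_mul, neg_one_sq, one_pow, mul_one]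

lemma Z_univ (k : ℕ) (hk : 2 * k + 1 ≤ m) :
    Z x k Finset.univ = (m.descFactorial (2 * k + 1) : ℝ) * Ntilde k x := by
  have hcu : (Finset.univ : Finset (Fin m)).card = m := by simp
  rw [bridgeZ x k Finset.univ (by rw [hcu]; omega), hcu]
  unfold Ntilde pnorm
  rw [Finset.mul_sum,
    ← Finset.sum_range_reflect (fun i => (m.descFactorial (2 * k + 1) : ℝ) *
      ((-1 : ℝ) ^ i * (k.choose i : ℝ) * (esymm (2 * k + 1 - 2 * i) x
        / (m.choose (2 * k + 1 - 2 * i) : ℝ)))) (k + 1)]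
  refine Finset.sum_congr rfl fun u hu => ?_
  have hu' : u ≤ k := by have := Finset.mem_range.mp hu; omega
  simp only [Nat.add_sub_cancel]
  rw [show 2 * k + 1 - 2 * (k - u) = 2 * u + 1 by omega, Nat.choose_symm hu',
    neg_one_pow_sub hu']
  have hcz : ((m.choose (2 * u + 1) : ℕ) : ℝ) ≠ 0 :=
    Nat.cast_ne_zero.mpr (Nat.choose_pos (by omega)).ne'
  have hgz : ((gZ k u m : ℕ) : ℝ) * ((m.choose (2 * u + 1) : ℕ) : ℝ)
      = ((k.choose u : ℕ) : ℝ) * ((m.descFactorial (2 * k + 1) : ℕ) : ℝ) := by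
    exact_mod_cast congrArg (fun t : ℕ => (t : ℝ)) (gZ_choose k u m hu')
  have hE : esymm (2 * u + 1) x = E x (2 * u + 1) Finset.univ := rfl
  rw [hE]
  have hdf : ((m.descFactorial (2 * k + 1) : ℕ) : ℝ)
      = ((m - 2 * k : ℕ) : ℝ) * ((m.descFactorial (2 * k) : ℕ) : ℝ) := by
    exact_mod_cast congrArg (fun t : ℕ => (t : ℝ)) (Nat.descFactorial_succ m (2 * k))
  have hinv := mul_inv_cancel₀ hcz
  rw [div_eq_mul_inv]
  linear_combination ((-1 : ℝ) ^ (k + u) * E x (2 * u + 1) Finset.univ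
      * ((m.choose (2 * u + 1) : ℕ) : ℝ)⁻¹) * hgz
    - ((-1 : ℝ) ^ (k + u) * ((gZ k u m : ℕ) : ℝ) * E x (2 * u + 1) Finset.univ) * hinv

lemma W_univ (k : ℕ) (hk : 2 * k ≤ m) :
    W x k Finset.univ = (m.descFactorial (2 * k) : ℝ) * Ltilde k x := by
  have hcu : (Finset.univ : Finset (Fin m)).card = m := by simp
  rw [bridgeW x k Finset.univ (by rw [hcu]; omega), hcu]
  unfold Ltilde pnorm
  rw [Finset.mul_sum,
    ← Finset.sum_range_reflect (fun i => (m.descFactorial (2 * k) : ℝ) *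
      ((-1 : ℝ) ^ i * (k.choose i : ℝ) * (esymm (2 * k - 2 * i) x
        / (m.choose (2 * k - 2 * i) : ℝ)))) (k + 1)]
  refine Finset.sum_congr rfl fun u hu => ?_
  have hu' : u ≤ k := by have := Finset.mem_range.mp hu; omega
  simp only [Nat.add_sub_cancel]
  rw [show 2 * k - 2 * (k - u) = 2 * u by omega, Nat.choose_symm hu',
    neg_one_pow_sub hu']
  have hcz : ((m.choose (2 * u) : ℕ) : ℝ) ≠ 0 :=
    Nat.cast_ne_zero.mpr (Nat.choose_pos (by omega)).ne'
  have hgz : ((gW k u m : ℕ) : ℝ) * ((m.choose (2 * u) : ℕ) : ℝ)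
      = ((k.choose u : ℕ) : ℝ) * ((m.descFactorial (2 * k) : ℕ) : ℝ) := by
    exact_mod_cast congrArg (fun t : ℕ => (t : ℝ)) (gW_choose k u m hu')
  have hE : esymm (2 * u) x = E x (2 * u) Finset.univ := rfl
  rw [hE]
  have hinv := mul_inv_cancel₀ hcz
  rw [div_eq_mul_inv]
  linear_combination ((-1 : ℝ) ^ (k + u) * E x (2 * u) Finset.univ
      * ((m.choose (2 * u) : ℕ) : ℝ)⁻¹) * hgz
    - ((-1 : ℝ) ^ (k + u) * ((gW k u m : ℕ) : ℝ) * E x (2 * u) Finset.univ) * hinv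

end HC

/-- If `κ ∈ Γ` has positive entries and `Ñ_k(κ) = p₁(κ) L̃_k(κ)`, then all entries
are at least `1` (h-convexity). -/
theorem hconvex_of_Ntilde_eq (n k : ℕ) (hn : 3 ≤ n) (hk : 1 ≤ k)
    (hkn : 2 * k + 1 ≤ n - 1) (κ : Fin (n - 1) → ℝ)
    (hΓ : ∀ i j : Fin (n - 1), i ≠ j → 1 ≤ κ i * κ j)
    (hpos : ∀ i, 0 < κ i)
    (heq : Ntilde k κ = pnorm 1 κ * Ltilde k κ) :
    ∀ i, 1 ≤ κ i := by

  intro i0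
  by_contra hlt
  push_neg at hlt
  obtain ⟨j, rfl⟩ : ∃ j, k = j + 1 := ⟨k - 1, by omega⟩
  have hcu : (Finset.univ : Finset (Fin (n - 1))).card = n - 1 := by simp
  have hA : 2 * j + 3 ≤ (Finset.univ : Finset (Fin (n - 1))).card := by rw [hcu]; omega
  have hkey := HC.key κ j Finset.univ hA
  have hZ := HC.Z_univ κ (j + 1) (by omega)
  have hW := HC.W_univ κ (j + 1) (by omega)
  have hE1 : HC.E κ 1 Finset.univ = esymm 1 κ := rfl
  have hne : ((n - 1 : ℕ) : ℝ) ≠ 0 := Nat.cast_ne_zero.mpr (by omega)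
  have hp1' : esymm 1 κ = ((n - 1 : ℕ) : ℝ) * pnorm 1 κ := by
    unfold pnorm
    rw [Nat.choose_one_right]
    rw [eq_comm, mul_comm, div_mul_eq_mul_div, mul_div_assoc, div_self hne, mul_one]
  rw [hcu, hZ, hW, hE1, hp1', heq] at hkey
  have hdf : (((n - 1).descFactorial (2 * (j + 1) + 1) : ℕ) : ℝ)
      = (((n - 1) - 2 * j - 2 : ℕ) : ℝ) * (((n - 1).descFactorial (2 * (j + 1)) : ℕ) : ℝ) := by
    have h := Nat.descFactorial_succ (n - 1) (2 * (j + 1))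
    rw [show (n - 1) - 2 * (j + 1) = (n - 1) - 2 * j - 2 by omega] at h
    exact_mod_cast congrArg (fun t : ℕ => (t : ℝ)) h
  have h0 : ((j : ℝ) + 1) * (∑ i ∈ Finset.univ, ∑ l ∈ Finset.univ.erase i,
      (κ i - κ l) ^ 2 * HC.Z κ j ((Finset.univ.erase i).erase l)) = 0 := by
    rw [← hkey, hdf]
    ring
  have hSQ : (∑ i ∈ Finset.univ, ∑ l ∈ Finset.univ.erase i,
      (κ i - κ l) ^ 2 * HC.Z κ j ((Finset.univ.erase i).erase l)) = 0 := by
    have hj : ((j : ℝ) + 1) ≠ 0 := by positivity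
    exact (mul_eq_zero.mp h0).resolve_left hj
  -- now derive a contradiction: the sum is strictly positive
  have hgt : ∀ i, i ≠ i0 → 1 < κ i := by
    intro i hi
    by_contra hc
    push_neg at hc
    have h2 : κ i * κ i0 ≤ κ i0 := by nlinarith [hpos i0, hpos i]
    linarith [hΓ i i0 hi]
  obtain ⟨l0, hl0⟩ : ∃ l0 : Fin (n - 1), l0 ≠ i0 := by
    have : 1 < Fintype.card (Fin (n - 1)) := by simp; omega
    exact Fintype.exists_ne_of_one_lt_card this i0
  have hterm_nonneg : ∀ i ∈ (Finset.univ : Finset (Fin (n - 1))),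
      ∀ l ∈ Finset.univ.erase i,
      0 ≤ (κ i - κ l) ^ 2 * HC.Z κ j ((Finset.univ.erase i).erase l) := by
    intro i _ l _
    refine mul_nonneg (sq_nonneg _) ?_
    exact HC.Z_nonneg κ j _ (fun a _ => (hpos a).le)
      (fun a _ b _ hab => hΓ a b hab)
  have hSQpos : 0 < ∑ i ∈ Finset.univ, ∑ l ∈ Finset.univ.erase i,
      (κ i - κ l) ^ 2 * HC.Z κ j ((Finset.univ.erase i).erase l) := by
    refine Finset.sum_pos' (fun i hi => Finset.sum_nonneg (fun l hl =>
      hterm_nonneg i hi l hl)) ⟨i0, Finset.mem_univ i0, ?_⟩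
    refine Finset.sum_pos' (fun l hl => hterm_nonneg i0 (Finset.mem_univ i0) l hl)
      ⟨l0, Finset.mem_erase.mpr ⟨hl0, Finset.mem_univ l0⟩, ?_⟩
    have hgl0 : 1 < κ l0 := hgt l0 hl0
    have hsq : 0 < (κ i0 - κ l0) ^ 2 := by nlinarith
    refine mul_pos hsq ?_
    refine HC.Z_pos κ j _ (fun a ha => ?_) ?_
    · have ha1 : a ∈ Finset.univ.erase i0 := Finset.mem_of_mem_erase ha
      exact hgt a (Finset.mem_erase.mp ha1).1
    · rw [Finset.card_erase_of_mem, Finset.card_erase_of_mem (Finset.mem_univ i0)]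
      · rw [hcu]; omega
      · exact Finset.mem_erase.mpr ⟨hl0, Finset.mem_univ l0⟩
  linarith
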